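/- The importance sampling distribution is feasible for the adaptive-probability program and attains the rate θ*: let κ ∈ ℝⁿ with κ ≠ 0 and I = {i : κ_i ≠ 0}, let v_i ≥ 0, λ > 0, γ > 0, n ≥ 1, and define p*_i = (v_i + nλγ)/∑_{j=1}^n(v_j + nλγ) and θ(κ, p) = nλγ·(∑_{i∈I} κ_i²)/(∑_{i∈I} κ_i²(v_i + nλγ)/p_i). Then θ(κ, p*) = θ* where θ* = nλγ/∑_{j=1}^n(v_j + nλγ), and θ* ≤ min_{i∈I} p*_i. -/

import Mathlib

open scoped BigOperators

/-- The importance sampling distribution is feasible for the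
adaptive-probability program and attains the rate `θ*`: with
`p*ᵢ = (vᵢ+nλγ)/∑ⱼ(vⱼ+nλγ)` and
`θ(κ,p) = nλγ(∑_{i∈I}κᵢ²)/(∑_{i∈I}κᵢ²(vᵢ+nλγ)/pᵢ)` for `I = {i : κᵢ ≠ 0}`, one has
`θ(κ,p*) = θ*` and `θ* ≤ min_{i∈I} p*ᵢ`, where `θ* = nλγ/∑ⱼ(vⱼ+nλγ)`. -/
theorem stmt12 (n : ℕ) (hn : 1 ≤ n)
    (v : Fin n → ℝ) (hv : ∀ i, 0 ≤ v i)
    (lam gam : ℝ) (hlam : 0 < lam) (hgam : 0 < gam)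
    (κ : Fin n → ℝ) (hκ : κ ≠ 0)
    (pstar : Fin n → ℝ)
    (hpstar : ∀ i, pstar i = (v i + n * lam * gam) / ∑ j, (v j + n * lam * gam))
    (θstar : ℝ) (hθstar : θstar = (n : ℝ) * lam * gam / ∑ j, (v j + n * lam * gam)) :
    ((n : ℝ) * lam * gam *
        (∑ i ∈ Finset.univ.filter (fun i => κ i ≠ 0), κ i ^ 2) /
        (∑ i ∈ Finset.univ.filter (fun i => κ i ≠ 0),
          κ i ^ 2 * (v i + n * lam * gam) / pstar i)) = θstar ∧
      (∀ i, κ i ≠ 0 → θstar ≤ pstar i) := by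
  set c : ℝ := (n : ℝ) * lam * gam with hc
  have hc0 : 0 < c := by
    have : (1:ℝ) ≤ (n:ℝ) := by exact_mod_cast hn
    positivity
  set S : ℝ := ∑ j, (v j + c) with hS
  have hterm : ∀ j, 0 < v j + c := fun j => by have := hv j; linarith
  have hS0 : 0 < S := by
    apply Finset.sum_pos (fun j _ => hterm j)
    exact Finset.univ_nonempty_iff.mpr ⟨⟨0, hn⟩⟩
  have hsum : (∑ i ∈ Finset.univ.filter (fun i => κ i ≠ 0),
      κ i ^ 2 * (v i + c) / pstar i)
      = (∑ i ∈ Finset.univ.filter (fun i => κ i ≠ 0), κ i ^ 2) * S := by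
    rw [Finset.sum_mul]
    apply Finset.sum_congr rfl
    intro i _
    rw [hpstar i]
    have h := (hterm i).ne'
    field_simp
  have hT0 : 0 < ∑ i ∈ Finset.univ.filter (fun i => κ i ≠ 0), κ i ^ 2 := by
    obtain ⟨i, hi⟩ := Function.ne_iff.mp hκ
    apply Finset.sum_pos'
    · intro j _; positivity
    · exact ⟨i, Finset.mem_filter.mpr ⟨Finset.mem_univ i, hi⟩, by
        have := sq_abs (κ i); nlinarith [abs_pos.mpr hi]⟩
  constructor
  · rw [hsum, hθstar]
    rw [mul_comm _ ((∑ i ∈ Finset.univ.filter (fun i => κ i ≠ 0), κ i ^ 2) : ℝ)] -- dummy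
    field_simp
  · intro i hi
    rw [hθstar, hpstar i]
    have := hv i
    gcongr
    linarith
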